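/- Let N and M be dual finite-dimensional real vector spaces with a perfect pairing ⟨·,·⟩, and let F ⊆ N be a simplicial cone with ray generators γ₁,…,γ_d forming a basis of N. For a nonzero vector χ ∈ M, the hyperplane H_χ = {λ ∈ N : ⟨λ,χ⟩ = 0} satisfies H_χ ∩ F ≠ {0} if and only if χ lies in (⋃_{i=1}^d {χ' : ⟨γ_i,χ'⟩ ≥ 0}) \ (⋂_{i=1}^d {χ' : ⟨γ_i,χ'⟩ > 0}). -/

import Mathlib

/-- For a perfect pairing between `N` and `M` and the simplicial cone `F`
generated by a basis `γ` of `N`, the hyperplane `H_χ` of a nonzero `χ ∈ M` meets `F`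
nontrivially iff `χ` lies in `(⋃ i, Ξ_{γᵢ ≥ 0}) \ (⋂ i, Ξ_{γᵢ > 0})`. -/
theorem stmt0 {N M : Type*} [AddCommGroup N] [Module ℝ N] [AddCommGroup M] [Module ℝ M]
    {d : ℕ} (B : N →ₗ[ℝ] M →ₗ[ℝ] ℝ)
    (hB1 : ∀ n : N, (∀ m : M, B n m = 0) → n = 0)
    (hB2 : ∀ m : M, (∀ n : N, B n m = 0) → m = 0)
    (γ : Module.Basis (Fin d) ℝ N)
    (F : Set N) (hF : F = {v : N | ∃ a : Fin d → ℝ, (∀ i, 0 ≤ a i) ∧ v = ∑ i, a i • γ i})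
    (χ : M) (hχ : χ ≠ 0) :
    {l : N | B l χ = 0} ∩ F ≠ {0} ↔
      χ ∈ (⋃ i : Fin d, {χ' : M | 0 ≤ B (γ i) χ'}) \
          (⋂ i : Fin d, {χ' : M | 0 < B (γ i) χ'}) := by
  subst hF
  have h0 : (0:N) ∈ {l : N | B l χ = 0} ∩
      {v : N | ∃ a : Fin d → ℝ, (∀ i, 0 ≤ a i) ∧ v = ∑ i, a i • γ i} := by
    refine ⟨by simp, ⟨0, fun i => le_refl 0, by simp⟩⟩
  constructor
  · intro hne
    have : ∃ v ∈ ({l : N | B l χ = 0} ∩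
        {v : N | ∃ a : Fin d → ℝ, (∀ i, 0 ≤ a i) ∧ v = ∑ i, a i • γ i}), v ≠ 0 := by
      by_contra h
      push_neg at h
      exact hne (Set.eq_singleton_iff_unique_mem.mpr ⟨h0, h⟩)
    obtain ⟨v, ⟨hvH, a, ha, hva⟩, hv0⟩ := this
    have hsum : ∑ i, a i * B (γ i) χ = 0 := by
      have := hvH
      simp only [Set.mem_setOf_eq, hva] at this
      simpa [map_sum] using this
    obtain ⟨j, hj⟩ : ∃ j, a j ≠ 0 := by
      by_contra h
      push_neg at h
      exact hv0 (by simp [hva, h])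
    have hj' : 0 < a j := lt_of_le_of_ne (ha j) (Ne.symm hj)
    constructor
    · by_contra h
      simp only [Set.mem_iUnion, Set.mem_setOf_eq, not_exists, not_le] at h
      have : ∑ i, a i * B (γ i) χ < 0 := by
        have h1 : ∀ i ∈ Finset.univ, a i * B (γ i) χ ≤ (0 : Fin d → ℝ) i := by
          intro i _
          exact mul_nonpos_of_nonneg_of_nonpos (ha i) (le_of_lt (h i))
        have h2 : a j * B (γ j) χ < (0 : Fin d → ℝ) j :=
          mul_neg_of_pos_of_neg hj' (h j)
        calc ∑ i, a i * B (γ i) χ < ∑ i : Fin d, (0 : Fin d → ℝ) i :=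
              Finset.sum_lt_sum h1 ⟨j, Finset.mem_univ j, h2⟩
          _ = 0 := by simp
      linarith [hsum]
    · intro h
      simp only [Set.mem_iInter, Set.mem_setOf_eq] at h
      have : 0 < ∑ i, a i * B (γ i) χ := by
        have h1 : ∀ i ∈ Finset.univ, (0 : Fin d → ℝ) i ≤ a i * B (γ i) χ := by
          intro i _
          exact mul_nonneg (ha i) (le_of_lt (h i))
        have h2 : (0 : Fin d → ℝ) j < a j * B (γ j) χ := mul_pos hj' (h j)
        calc (0:ℝ) = ∑ i : Fin d, (0 : Fin d → ℝ) i := by simp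
          _ < ∑ i, a i * B (γ i) χ := Finset.sum_lt_sum h1 ⟨j, Finset.mem_univ j, h2⟩
      linarith [hsum]
  · rintro ⟨hU, hI⟩
    simp only [Set.mem_iUnion, Set.mem_setOf_eq] at hU
    simp only [Set.mem_iInter, Set.mem_setOf_eq, not_forall, not_lt] at hI
    obtain ⟨i, hi⟩ := hU
    obtain ⟨j, hj⟩ := hI
    intro heq
    -- produce a nonzero element of the intersection, contradiction
    by_cases hz : ∃ k, B (γ k) χ = 0
    · obtain ⟨k, hk⟩ := hz
      have hmem : γ k ∈ ({l : N | B l χ = 0} ∩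
          {v : N | ∃ a : Fin d → ℝ, (∀ i, 0 ≤ a i) ∧ v = ∑ i, a i • γ i}) := by
        refine ⟨hk, ⟨fun m => if m = k then 1 else 0, fun m => by positivity, ?_⟩⟩
        simp [Finset.sum_ite_eq']
      rw [heq] at hmem
      exact γ.ne_zero k (by simpa using hmem)
    · push_neg at hz
      have hi' : 0 < B (γ i) χ := lt_of_le_of_ne hi (Ne.symm (hz i))
      have hj' : B (γ j) χ < 0 := lt_of_le_of_ne hj (hz j)
      have hij : i ≠ j := by
        intro h; rw [h] at hi'; linarith
      set c := B (γ i) χ with hc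
      set e := B (γ j) χ with he
      set v : N := (-e) • γ i + c • γ j with hv
      have hmem : v ∈ ({l : N | B l χ = 0} ∩
          {v : N | ∃ a : Fin d → ℝ, (∀ i, 0 ≤ a i) ∧ v = ∑ i, a i • γ i}) := by
        constructor
        · show B v χ = 0
          simp only [hv, map_add, map_smul, LinearMap.add_apply, LinearMap.smul_apply,
            smul_eq_mul, ← hc, ← he]
          ring
        · refine ⟨fun k => if k = i then -e else if k = j then c else 0, ?_, ?_⟩
          · intro k
            by_cases hk : k = i
            · simp [hk]; linarith
            · by_cases hk' : k = j
              · subst hk'; simp [hk, Ne.symm hij]; linarith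
              · simp [hk, hk']
          · have : ∀ k : Fin d, (if k = i then -e else if k = j then c else 0) • γ k
                = (if k = i then (-e) • γ i else 0) + (if k = j then c • γ j else 0) := by
              intro k
              by_cases hk : k = i
              · subst hk; simp [hij]
              · by_cases hk' : k = j
                · subst hk'; simp [hk]
                · simp [hk, hk']
            rw [hv, Finset.sum_congr rfl (fun k _ => this k), Finset.sum_add_distrib]
            simp [Finset.sum_ite_eq']
      rw [heq] at hmem
      have hvz : v = 0 := hmem
      have := γ.repr.injective.eq_iff.mpr hvz
      have hcoord : (γ.repr v) i = -e := by
        simp [hv, Module.Basis.repr_self, Finsupp.single_apply, Ne.symm hij]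
      rw [hvz] at hcoord
      simp at hcoord
      linarith
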